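/- Let z > 0, τ > 0 and let g > 0 satisfy g³ + 2g² + (1 + τ/z − 1/z)g − 1/z = 0, and set ḡ = 1/(1+g). Then −log((1+g)² − τg² − τg²ḡ² − g²(1−τg²ḡ²)) − log(ḡ²) = log((1+g)²/z⁻¹) − log(1/z⁻¹·(1 + 2zg³ + 2zg²))·1, i.e., equals log(ρ(1+g)²) − log(ρ + 2g³ + 2g²) with ρ = 1/z. -/

import Mathlib

/-- Let z > 0, τ > 0 and let g > 0 satisfy g³ + 2g² + (1 + τ/z − 1/z)g − 1/z = 0,
and set ḡ = 1/(1+g). Then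
−log((1+g)² − τg² − τg²ḡ² − g²(1−τg²ḡ²)) − log(ḡ²) = log(ρ(1+g)²) − log(ρ + 2g³ + 2g²)
with ρ = 1/z. -/
theorem stmt_5 (z τ g : ℝ) (hz : 0 < z) (hτ : 0 < τ) (hg : 0 < g)
    (hcubic : g ^ 3 + 2 * g ^ 2 + (1 + τ / z - 1 / z) * g - 1 / z = 0) :
    -Real.log ((1 + g) ^ 2 - τ * g ^ 2 - τ * g ^ 2 * (1 / (1 + g)) ^ 2
        - g ^ 2 * (1 - τ * g ^ 2 * (1 / (1 + g)) ^ 2))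
      - Real.log ((1 / (1 + g)) ^ 2) =
    Real.log ((1 / z) * (1 + g) ^ 2) - Real.log (1 / z + 2 * g ^ 3 + 2 * g ^ 2) := by
  have h1g : (0:ℝ) < 1 + g := by linarith
  have hτg : τ * g = 1 + g - z * g * (1 + g) ^ 2 := by
    field_simp at hcubic
    linear_combination hcubic
  have hA : (1 + g) ^ 2 - τ * g ^ 2 - τ * g ^ 2 * (1 / (1 + g)) ^ 2
      - g ^ 2 * (1 - τ * g ^ 2 * (1 / (1 + g)) ^ 2)
      = 1 + 2 * z * g ^ 3 + 2 * z * g ^ 2 := by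
    have hτval : τ = (1 + g - z * g * (1 + g) ^ 2) / g := by
      field_simp
      linear_combination hτg
    rw [hτval]
    field_simp
    ring
  have hP : (0:ℝ) < 1 + 2 * z * g ^ 3 + 2 * z * g ^ 2 := by positivity
  rw [hA, show 1 / z + 2 * g ^ 3 + 2 * g ^ 2
      = (1 + 2 * z * g ^ 3 + 2 * z * g ^ 2) / z by field_simp,
    Real.log_div hP.ne' hz.ne',
    Real.log_mul (by positivity) (by positivity),
    show ((1 : ℝ) / (1 + g)) ^ 2 = ((1 + g) ^ 2)⁻¹ by
      rw [one_div, inv_pow],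
    Real.log_inv, one_div, Real.log_inv]
  ring
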